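/- Let c > 0, L > 0 and α > 0 satisfy α ≤ L/2 and 2α²/L ≤ 1/(100c). Then there do not exist three distinct points a, a', a'' ∈ ℝ² such that: (i) their pairwise Euclidean distances are all ≥ L; (ii) there is a unit vector e ∈ ℝ² with |⟨a − a', e⟩| ≤ α, |⟨a − a'', e⟩| ≤ α and |⟨a' − a'', e⟩| ≤ α (i.e. the three points lie in a strip of width α); and (iii) for each of the three pairwise distances d there exists an integer k with |c·d − k/2 − 1/8| ≤ 1/100. -/

import Mathlib

open scoped RealInnerProductSpace

lemma abs_add_three_cases (x y : ℝ) :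
    |x + y| = |x| + |y| ∨ |x| = |x + y| + |y| ∨ |y| = |x + y| + |x| := by
  rcases abs_cases x with ⟨hx, hx'⟩ | ⟨hx, hx'⟩ <;>
  rcases abs_cases y with ⟨hy, hy'⟩ | ⟨hy, hy'⟩ <;>
  rcases abs_cases (x + y) with ⟨hxy, hxy'⟩ | ⟨hxy, hxy'⟩ <;>
  rw [hx, hy, hxy] <;>
  first
  | (left; linarith)
  | (right; left; linarith)
  | (right; right; linarith)

lemma pair_bound (L α d u v : ℝ) (hL : 0 < L) (hd : L ≤ d)
    (huv : d ^ 2 = u ^ 2 + v ^ 2) (hv : |v| ≤ α) :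
    |u| ≤ d ∧ d - α ^ 2 / L ≤ |u| := by
  have h1 : |u| ≤ d := by nlinarith [sq_abs u, abs_nonneg u, sq_abs v, abs_nonneg v]
  refine ⟨h1, ?_⟩
  have h2 : L * (d - |u|) ≤ α ^ 2 := by
    nlinarith [sq_abs u, abs_nonneg u, sq_abs v, abs_nonneg v]
  have h3 : d - |u| ≤ α ^ 2 / L := (le_div_iff₀ hL).2 (by linarith [mul_comm L (d - |u|)])
  linarith

lemma quant_contra (c L α d1 d2 d3 : ℝ) (hc : 0 < c) (hL : 0 < L)
    (h0 : d3 ≤ d1 + d2) (h1 : d1 + d2 - d3 ≤ 2 * α ^ 2 / L)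
    (hα2 : 2 * α ^ 2 / L ≤ 1 / (100 * c))
    (q1 : ∃ k : ℤ, |c * d1 - (k : ℝ) / 2 - 1 / 8| ≤ 1 / 100)
    (q2 : ∃ k : ℤ, |c * d2 - (k : ℝ) / 2 - 1 / 8| ≤ 1 / 100)
    (q3 : ∃ k : ℤ, |c * d3 - (k : ℝ) / 2 - 1 / 8| ≤ 1 / 100) : False := by
  obtain ⟨k1, hk1⟩ := q1
  obtain ⟨k2, hk2⟩ := q2
  obtain ⟨k3, hk3⟩ := q3
  rw [abs_le] at hk1 hk2 hk3
  have hnn : 0 ≤ c * (d1 + d2 - d3) := mul_nonneg hc.le (by linarith)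
  have hub : c * (d1 + d2 - d3) ≤ 1 / 100 := by
    have e1 : c * (1 / (100 * c)) = 1 / 100 := by field_simp
    have : c * (d1 + d2 - d3) ≤ c * (1 / (100 * c)) :=
      mul_le_mul_of_nonneg_left (le_trans h1 hα2) hc.le
    linarith
  have hm1 : ((k1 + k2 - k3 : ℤ) : ℝ) ≤ -17 / 100 := by push_cast; linarith
  have hm2 : (-31 : ℝ) / 100 ≤ ((k1 + k2 - k3 : ℤ) : ℝ) := by push_cast; linarith
  have h4 : ((k1 + k2 - k3 : ℤ) : ℝ) < 0 := by linarith
  have h5 : (-1 : ℝ) < ((k1 + k2 - k3 : ℤ) : ℝ) := by linarith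
  have h6 : k1 + k2 - k3 < 0 := by exact_mod_cast h4
  have h7 : (-1 : ℤ) < k1 + k2 - k3 := by exact_mod_cast h5
  omega

theorem no_three_quantized_points_in_strip (c L α : ℝ) (hc : 0 < c) (hL : 0 < L)
    (hα : 0 < α) (hαL : α ≤ L / 2) (hα2 : 2 * α ^ 2 / L ≤ 1 / (100 * c)) :
    ¬ ∃ a a' a'' : EuclideanSpace ℝ (Fin 2),
      a ≠ a' ∧ a ≠ a'' ∧ a' ≠ a'' ∧
      (L ≤ dist a a' ∧ L ≤ dist a a'' ∧ L ≤ dist a' a'') ∧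
      (∃ e : EuclideanSpace ℝ (Fin 2), ‖e‖ = 1 ∧
        |⟪a - a', e⟫| ≤ α ∧ |⟪a - a'', e⟫| ≤ α ∧ |⟪a' - a'', e⟫| ≤ α) ∧
      (∃ k : ℤ, |c * dist a a' - (k : ℝ) / 2 - 1 / 8| ≤ 1 / 100) ∧
      (∃ k : ℤ, |c * dist a a'' - (k : ℝ) / 2 - 1 / 8| ≤ 1 / 100) ∧
      (∃ k : ℤ, |c * dist a' a'' - (k : ℝ) / 2 - 1 / 8| ≤ 1 / 100) := by
  rintro ⟨a, a', a'', -, -, -, ⟨hd1, hd2, hd3⟩, ⟨e, he, hv1, hv2, hv3⟩, q1, q2, q3⟩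
  have he2 : e 0 ^ 2 + e 1 ^ 2 = 1 := by
    have h := EuclideanSpace.norm_sq_eq e
    rw [he] at h
    simp [Fin.sum_univ_two, Real.norm_eq_abs, sq_abs] at h
    linarith
  have hinner : ∀ p q : EuclideanSpace ℝ (Fin 2),
      (⟪p - q, e⟫ : ℝ) = (p 0 - q 0) * e 0 + (p 1 - q 1) * e 1 := by
    intro p q
    simp [PiLp.inner_apply, Fin.sum_univ_two, RCLike.inner_apply, conj_trivial]
    ring
  have hdist : ∀ p q : EuclideanSpace ℝ (Fin 2),
      dist p q ^ 2 = (p 0 - q 0) ^ 2 + (p 1 - q 1) ^ 2 := by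
    intro p q
    rw [dist_eq_norm, EuclideanSpace.norm_sq_eq]
    simp [Fin.sum_univ_two, Real.norm_eq_abs, sq_abs]
  -- signed transverse components
  have hsq : ∀ p q : EuclideanSpace ℝ (Fin 2),
      dist p q ^ 2 = ((p 1 - q 1) * e 0 - (p 0 - q 0) * e 1) ^ 2 + (⟪p - q, e⟫ : ℝ) ^ 2 := by
    intro p q
    rw [hdist, hinner]
    nlinarith [he2]
  set u12 : ℝ := (a 1 - a' 1) * e 0 - (a 0 - a' 0) * e 1 with hu12
  set u23 : ℝ := (a' 1 - a'' 1) * e 0 - (a' 0 - a'' 0) * e 1 with hu23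
  set u13 : ℝ := (a 1 - a'' 1) * e 0 - (a 0 - a'' 0) * e 1 with hu13
  have hsum : u13 = u12 + u23 := by rw [hu12, hu23, hu13]; ring
  obtain ⟨hb12, hlb12⟩ := pair_bound L α (dist a a') u12 (⟪a - a', e⟫) hL hd1 (hsq a a') hv1
  obtain ⟨hb13, hlb13⟩ := pair_bound L α (dist a a'') u13 (⟪a - a'', e⟫) hL hd2 (hsq a a'') hv2
  obtain ⟨hb23, hlb23⟩ := pair_bound L α (dist a' a'') u23 (⟪a' - a'', e⟫) hL hd3 (hsq a' a'') hv3
  rcases abs_add_three_cases u12 u23 with h | h | h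
  · -- |u13| = |u12| + |u23| : d13 is the big one
    rw [← hsum] at h
    refine quant_contra c L α (dist a a') (dist a' a'') (dist a a'') hc hL
      (dist_triangle a a' a'') ?_ hα2 q1 q3 q2
    have : dist a a' + dist a' a'' - 2 * (α ^ 2 / L) ≤ dist a a'' := by linarith
    linarith [mul_div_assoc 2 (α ^ 2) L]
  · -- |u12| = |u13| + |u23| : d12 is the big one
    rw [← hsum] at h
    refine quant_contra c L α (dist a a'') (dist a' a'') (dist a a') hc hL
      ?_ ?_ hα2 q2 q3 q1
    · calc dist a a' ≤ dist a a'' + dist a'' a' := dist_triangle a a'' a'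
        _ = dist a a'' + dist a' a'' := by rw [dist_comm a'' a']
    · have : dist a a'' + dist a' a'' - 2 * (α ^ 2 / L) ≤ dist a a' := by linarith
      linarith [mul_div_assoc 2 (α ^ 2) L]
  · -- |u23| = |u13| + |u12| : d23 is the big one
    rw [← hsum] at h
    refine quant_contra c L α (dist a a'') (dist a a') (dist a' a'') hc hL
      ?_ ?_ hα2 q2 q1 q3
    · calc dist a' a'' ≤ dist a' a + dist a a'' := dist_triangle a' a a''
        _ = dist a a' + dist a a'' := by rw [dist_comm a' a]
      linarith
    · have : dist a a'' + dist a a' - 2 * (α ^ 2 / L) ≤ dist a' a'' := by linarith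
      linarith [mul_div_assoc 2 (α ^ 2) L]
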